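/- The series ∑_{n≥0} F_n^3 / 100^n converges and equals 979900/96940301. -/

import Mathlib

open Real

set_option maxHeartbeats 1000000 in
theorem fib_cube_tsum :
    HasSum (fun n : ℕ => (Nat.fib n : ℝ) ^ 3 * (1 / 100) ^ n) (979900 / 96940301) := by
  obtain ⟨s, hsdef⟩ : ∃ s : ℝ, s = Real.sqrt 5 := ⟨_, rfl⟩
  have hs : s ^ 2 = 5 := by rw [hsdef]; exact Real.sq_sqrt (by norm_num)
  have hs_pos : 0 < s := by rw [hsdef]; exact Real.sqrt_pos.mpr (by norm_num)
  have hs_lt : s < 3 := by nlinarith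
  have hs_gt : 2 < s := by nlinarith
  have hsne : s ≠ 0 := ne_of_gt hs_pos
  have hs3 : s ^ 3 = 5 * s := by nlinarith
  have hφ : goldenRatio = (1 + s) / 2 := by rw [hsdef]
  have hψ : goldenConj = (1 - s) / 2 := by rw [hsdef]
  have c1 : goldenRatio ^ 3 = 2 + s := by
    rw [hφ]; linear_combination ((s + 3) / 8) * hs
  have c2 : goldenRatio ^ 2 * goldenConj = -(1 + s) / 2 := by
    rw [hφ, hψ]; linear_combination (-(1 + s) / 8) * hs
  have c3 : goldenRatio * goldenConj ^ 2 = (s - 1) / 2 := by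
    rw [hφ, hψ]; linear_combination (-(1 - s) / 8) * hs
  have c4 : goldenConj ^ 3 = 2 - s := by
    rw [hψ]; linear_combination ((3 - s) / 8) * hs
  have hr1 : |goldenRatio ^ 3 / 100| < 1 := by rw [c1, abs_lt]; constructor <;> nlinarith
  have hr2 : |goldenRatio ^ 2 * goldenConj / 100| < 1 := by
    rw [c2, abs_lt]; constructor <;> nlinarith
  have hr3 : |goldenRatio * goldenConj ^ 2 / 100| < 1 := by
    rw [c3, abs_lt]; constructor <;> nlinarith
  have hr4 : |goldenConj ^ 3 / 100| < 1 := by rw [c4, abs_lt]; constructor <;> nlinarith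
  have h1 := (hasSum_geometric_of_abs_lt_one hr1).mul_left (1 / (5 * s))
  have h2 := (hasSum_geometric_of_abs_lt_one hr2).mul_left (-3 / (5 * s))
  have h3 := (hasSum_geometric_of_abs_lt_one hr3).mul_left (3 / (5 * s))
  have h4 := (hasSum_geometric_of_abs_lt_one hr4).mul_left (-1 / (5 * s))
  have H := (h1.add h2).add (h3.add h4)
  have hfun : (fun n : ℕ => (Nat.fib n : ℝ) ^ 3 * (1 / 100) ^ n) =
      (fun n : ℕ => 1 / (5 * s) * (goldenRatio ^ 3 / 100) ^ n +
        -3 / (5 * s) * (goldenRatio ^ 2 * goldenConj / 100) ^ n +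
        (3 / (5 * s) * (goldenRatio * goldenConj ^ 2 / 100) ^ n +
         -1 / (5 * s) * (goldenConj ^ 3 / 100) ^ n)) := by
    funext n
    have e1 : (goldenRatio ^ 3 / 100) ^ n = (goldenRatio ^ n) ^ 3 * (1 / 100) ^ n := by
      rw [div_pow, pow_right_comm]; simp only [one_div, inv_pow]; ring
    have e2 : (goldenRatio ^ 2 * goldenConj / 100) ^ n
        = (goldenRatio ^ n) ^ 2 * goldenConj ^ n * (1 / 100) ^ n := by
      rw [div_pow, mul_pow, pow_right_comm]; simp only [one_div, inv_pow]; ring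
    have e3 : (goldenRatio * goldenConj ^ 2 / 100) ^ n
        = goldenRatio ^ n * (goldenConj ^ n) ^ 2 * (1 / 100) ^ n := by
      rw [div_pow, mul_pow, pow_right_comm]; simp only [one_div, inv_pow]; ring
    have e4 : (goldenConj ^ 3 / 100) ^ n = (goldenConj ^ n) ^ 3 * (1 / 100) ^ n := by
      rw [div_pow, pow_right_comm]; simp only [one_div, inv_pow]; ring
    rw [Real.coe_fib_eq, e1, e2, e3, e4, ← hsdef, hφ, hψ, ← hφ, ← hψ]
    generalize goldenRatio ^ n = P
    generalize goldenConj ^ n = Q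
    rw [div_pow, hs3]
    field_simp
    ring
  rw [hfun]
  convert H using 1
  case e'_3 => rfl
  rw [c1, c2, c3, c4]
  symm
  have d1 : (1 : ℝ) - (2 + s) / 100 ≠ 0 := by intro h; nlinarith
  have d2 : (1 : ℝ) - -(1 + s) / 2 / 100 ≠ 0 := by intro h; nlinarith
  have d3 : (1 : ℝ) - (s - 1) / 2 / 100 ≠ 0 := by intro h; nlinarith
  have d4 : (1 : ℝ) - (2 - s) / 100 ≠ 0 := by intro h; nlinarith
  field_simp
  ring_nf
  have m1 : (98:ℝ) - s ≠ 0 := ne_of_gt (by linarith)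
  have m2 : (201:ℝ) + s ≠ 0 := ne_of_gt (by linarith)
  have m3 : (201:ℝ) - s ≠ 0 := ne_of_gt (by linarith)
  have m4 : (98:ℝ) + s ≠ 0 := ne_of_gt (by linarith)
  have n1 : s * 490 - 5 * 5 ≠ 0 := ne_of_gt (by nlinarith)
  have n2 : s * 1005 + 5 * 5 ≠ 0 := ne_of_gt (by nlinarith)
  have n3 : s * 1005 - 5 * 5 ≠ 0 := ne_of_gt (by nlinarith)
  have n4 : s * 490 + 5 * 5 ≠ 0 := ne_of_gt (by nlinarith)
  have hs4 : s ^ 4 = 25 := by nlinarith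
  field_simp
  ring_nf
  have hs5 : s ^ 5 = 25 * s := by nlinarith
  linarith [hs, hs3, hs4, hs5]
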